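/- Let C be the solution of the matrix ODE Ċ(t) = (A + u(t)B)C(t), C(0) = I, on [0,T], where A + kB is Metzler for all k ∈ [−1,1] and u : [0,T] → [−1,1] is measurable. Then C(t) has all entries nonnegative for every t ∈ [0,T]. -/

import Mathlib

open Matrix MeasureTheory Set intervalIntegral

set_option maxHeartbeats 1000000

attribute [local instance] Matrix.frobeniusNormedAddCommGroup Matrix.frobeniusNormedSpace

theorem transition_matrix_nonneg {n : Type*} [Fintype n] [DecidableEq n]
    (A B : Matrix n n ℝ) (T : ℝ) (hT : 0 ≤ T)
    (hMetzler : ∀ k : ℝ, k ∈ Set.Icc (-1 : ℝ) 1 → ∀ i j, i ≠ j → 0 ≤ (A + k • B) i j)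
    (u : ℝ → ℝ) (hu : Measurable u) (hu1 : ∀ t, u t ∈ Set.Icc (-1 : ℝ) 1)
    (C : ℝ → Matrix n n ℝ) (hC0 : C 0 = 1)
    (hCcont : ContinuousOn C (Set.Icc 0 T))
    (hC : ∀ t ∈ Set.Icc (0 : ℝ) T,
      C t = 1 + ∫ τ in (0 : ℝ)..t, (A + u τ • B) * C τ) :
    ∀ t ∈ Set.Icc (0 : ℝ) T, ∀ i j, 0 ≤ C t i j := by
  classical
  have h0T : (0:ℝ) ∈ Set.Icc (0:ℝ) T := ⟨le_rfl, hT⟩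
  -- the entry evaluation continuous linear maps
  set L : n → n → (Matrix n n ℝ →L[ℝ] ℝ) :=
    fun k l => LinearMap.toContinuousLinearMap (Matrix.entryLinearMap ℝ ℝ k l) with hLdef
  have hL : ∀ k l (X : Matrix n n ℝ), L k l X = X k l := fun _ _ _ => rfl
  have hCent : ∀ k l : n, ContinuousOn (fun τ => C τ k l) (Set.Icc 0 T) := by
    intro k l
    exact (L k l).continuous.comp_continuousOn hCcont
  -- constants
  set Λ : ℝ := 1 + ∑ p : n, ∑ q : n, (|A p q| + |B p q|) with hΛdef
  have hsum_nonneg : (0:ℝ) ≤ ∑ p : n, ∑ q : n, (|A p q| + |B p q|) :=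
    Finset.sum_nonneg fun p _ => Finset.sum_nonneg fun q _ => by positivity
  have hΛ1 : (1:ℝ) ≤ Λ := by rw [hΛdef]; linarith
  have hΛ0 : (0:ℝ) < Λ := lt_of_lt_of_le one_pos hΛ1
  have hMbound : ∀ (τ : ℝ) (k l : n), |(A + u τ • B) k l| ≤ Λ := by
    intro τ k l
    have h1 : |u τ| ≤ 1 := abs_le.2 ⟨(hu1 τ).1, (hu1 τ).2⟩
    have h2 : |(A + u τ • B) k l| ≤ |A k l| + |B k l| := by
      simp only [Matrix.add_apply, Matrix.smul_apply, smul_eq_mul]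
      calc |A k l + u τ * B k l| ≤ |A k l| + |u τ * B k l| := abs_add_le _ _
        _ ≤ |A k l| + |B k l| := by
            rw [abs_mul]; nlinarith [abs_nonneg (B k l)]
    have h3 : |A k l| + |B k l| ≤ ∑ q : n, (|A k q| + |B k q|) :=
      Finset.single_le_sum (f := fun q => |A k q| + |B k q|)
        (fun q _ => by positivity) (Finset.mem_univ l)
    have h4 : ∑ q : n, (|A k q| + |B k q|) ≤ ∑ p : n, ∑ q : n, (|A p q| + |B p q|) :=
      Finset.single_le_sum (f := fun p => ∑ q : n, (|A p q| + |B p q|))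
        (fun p _ => Finset.sum_nonneg fun q _ => by positivity) (Finset.mem_univ k)
    rw [hΛdef]; linarith
  have hMz : ∀ (τ : ℝ) (k l : n), k ≠ l → 0 ≤ (A + u τ • B) k l :=
    fun τ k l h => hMetzler (u τ) (hu1 τ) k l h
  clear_value Λ
  set K : ℝ := ((Fintype.card n : ℝ) + 1) * Λ + 1 with hKdef
  clear_value K
  have hK0 : (0:ℝ) < K := by
    have : (0:ℝ) ≤ (Fintype.card n : ℝ) := Nat.cast_nonneg _
    rw [hKdef]; nlinarith
  -- uniform bound on the entries of C
  obtain ⟨R, hR⟩ := IsCompact.exists_bound_of_continuousOn (isCompact_Icc (a := (0:ℝ)) (b := T))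
    (f := fun τ => ∑ p : n, ∑ q : n, |C τ p q|)
    (by
      apply continuousOn_finset_sum
      intro p _
      apply continuousOn_finset_sum
      intro q _
      exact (hCent p q).abs)
  have hRent : ∀ τ ∈ Set.Icc (0:ℝ) T, ∀ p q : n, |C τ p q| ≤ R := by
    intro τ hτ p q
    have h1 : |C τ p q| ≤ ∑ q' : n, |C τ p q'| :=
      Finset.single_le_sum (f := fun q' => |C τ p q'|) (fun _ _ => abs_nonneg _)
        (Finset.mem_univ q)
    have h2 : ∑ q' : n, |C τ p q'| ≤ ∑ p' : n, ∑ q' : n, |C τ p' q'| :=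
      Finset.single_le_sum (f := fun p' => ∑ q' : n, |C τ p' q'|)
        (fun _ _ => Finset.sum_nonneg fun _ _ => abs_nonneg _) (Finset.mem_univ p)
    have h3 := hR τ hτ
    rw [Real.norm_eq_abs] at h3
    have h4 := le_abs_self (∑ p' : n, ∑ q' : n, |C τ p' q'|)
    linarith
  -- integrability of the entries of (A + u τ • B) * C τ on [0, T]
  have hent : ∀ k l : n,
      IntegrableOn (fun τ => ((A + u τ • B) * C τ) k l) (Set.Icc 0 T) volume := by
    intro k l
    have heq : (fun τ => ((A + u τ • B) * C τ) k l)
        = fun τ => ∑ q : n, (A k q + u τ * B k q) * C τ q l := by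
      funext τ
      rw [Matrix.mul_apply]
      congr 1
    rw [heq]
    have hmeas : AEMeasurable (fun τ => ∑ q : n, (A k q + u τ * B k q) * C τ q l)
        (volume.restrict (Set.Icc 0 T)) := by
      apply Finset.aemeasurable_fun_sum
      intro q _
      exact ((measurable_const.add ((hu.mul measurable_const))).aemeasurable).mul
        ((hCent q l).aemeasurable measurableSet_Icc)
    refine Integrable.mono' (g := fun _ => (Fintype.card n : ℝ) * (Λ * R))
      (integrable_const _) hmeas.aestronglyMeasurable ?_
    refine (ae_restrict_iff' measurableSet_Icc).2 (Filter.Eventually.of_forall ?_)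
    intro τ hτ
    rw [Real.norm_eq_abs]
    have hR0 : 0 ≤ R := le_trans (abs_nonneg _) (hRent τ hτ k l)
    calc |∑ q : n, (A k q + u τ * B k q) * C τ q l|
        ≤ ∑ q : n, |(A k q + u τ * B k q) * C τ q l| := Finset.abs_sum_le_sum_abs _ _
      _ ≤ ∑ _q : n, Λ * R := by
          apply Finset.sum_le_sum
          intro q _
          rw [abs_mul]
          have h5 := hMbound τ k q
          have h6 := hRent τ hτ q l
          have := abs_nonneg ((A + u τ • B) k q)
          have h7 : |(A + u τ • B) k q| = |A k q + u τ * B k q| := by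
            simp [Matrix.add_apply, Matrix.smul_apply, smul_eq_mul]
          nlinarith [abs_nonneg (A k q + u τ * B k q), abs_nonneg (C τ q l)]
      _ = (Fintype.card n : ℝ) * (Λ * R) := by
          rw [Finset.sum_const, Finset.card_univ, nsmul_eq_mul]
  have hsub : ∀ a b : ℝ, a ∈ Set.Icc (0:ℝ) T → b ∈ Set.Icc (0:ℝ) T →
      Set.uIoc a b ⊆ Set.Icc (0:ℝ) T := by
    intro a b ha hb
    exact Set.Subset.trans Set.uIoc_subset_uIcc (Set.uIcc_subset_Icc ha hb)
  have hint : ∀ (k l : n) (a b : ℝ), a ∈ Set.Icc (0:ℝ) T → b ∈ Set.Icc (0:ℝ) T →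
      IntervalIntegrable (fun τ => ((A + u τ • B) * C τ) k l) volume a b := by
    intro k l a b ha hb
    rw [intervalIntegrable_iff]
    exact (hent k l).mono_set (hsub a b ha hb)
  -- matrix-valued integrability
  have hGmat : ∀ a b : ℝ, a ∈ Set.Icc (0:ℝ) T → b ∈ Set.Icc (0:ℝ) T →
      @IntervalIntegrable (Matrix n n ℝ)
        (Matrix.frobeniusNormedAddCommGroup (m := n) (n := n) (α := ℝ)).toUniformSpace.toTopologicalSpace _
        (fun τ => (A + u τ • B) * C τ) volume a b := by
    intro a b ha hb
    rw [intervalIntegrable_iff]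
    have heq : (fun τ => (A + u τ • B) * C τ)
        = fun τ => ∑ p : n, ∑ q : n,
            (((A + u τ • B) * C τ) p q) • Matrix.single p q (1:ℝ) := by
      funext τ
      conv_lhs => rw [Matrix.matrix_eq_sum_single ((A + u τ • B) * C τ)]
      congr 1; funext p; congr 1; funext q
      rw [Matrix.smul_single, smul_eq_mul, mul_one]
    rw [heq]
    apply integrable_finset_sum
    intro p _
    apply integrable_finset_sum
    intro q _
    exact ((hent p q).mono_set (hsub a b ha hb)).smul_const _
  -- entries of the interval integral
  have hentry : ∀ (a b : ℝ), a ∈ Set.Icc (0:ℝ) T → b ∈ Set.Icc (0:ℝ) T → ∀ k l : n,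
      (∫ τ in a..b, (A + u τ • B) * C τ) k l
        = ∫ τ in a..b, ((A + u τ • B) * C τ) k l := by
    intro a b ha hb k l
    calc (∫ τ in a..b, (A + u τ • B) * C τ) k l
        = L k l (∫ τ in a..b, (A + u τ • B) * C τ) := rfl
      _ = ∫ τ in a..b, L k l ((A + u τ • B) * C τ) :=
          ((L k l).intervalIntegral_comp_comm (hGmat a b ha hb)).symm
      _ = ∫ τ in a..b, ((A + u τ • B) * C τ) k l := rfl
  -- scalar integral equation
  have key : ∀ (k l : n) (s r : ℝ), s ∈ Set.Icc (0:ℝ) T → r ∈ Set.Icc (0:ℝ) T →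
      C r k l - C s k l = ∫ τ in s..r, ((A + u τ • B) * C τ) k l := by
    intro k l s r hs hr
    have e1 : C r k l = (1 : Matrix n n ℝ) k l + (∫ τ in (0:ℝ)..r, (A + u τ • B) * C τ) k l := by
      conv_lhs => rw [hC r hr]
      rw [Matrix.add_apply]
    have e2 : C s k l = (1 : Matrix n n ℝ) k l + (∫ τ in (0:ℝ)..s, (A + u τ • B) * C τ) k l := by
      conv_lhs => rw [hC s hs]
      rw [Matrix.add_apply]
    rw [e1, e2, hentry 0 r h0T hr k l, hentry 0 s h0T hs k l]
    have h5 := intervalIntegral.integral_interval_sub_left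
      (hint k l 0 r h0T hr) (hint k l 0 s h0T hs)
    linarith
  -- main claim
  have main : ∀ ε : ℝ, 0 < ε → ∀ l : n, ∀ r ∈ Set.Icc (0:ℝ) T, ∀ k : n,
      0 < C r k l + ε * Real.exp (K * r) := by
    intro ε hε l
    by_contra hcon
    push_neg at hcon
    obtain ⟨r₁, hr₁, k₁, hk₁⟩ := hcon
    set y : ℝ → n → ℝ := fun τ k => C τ k l + ε * Real.exp (K * τ) with hy
    clear_value y
    have hycont : ∀ k : n, ContinuousOn (fun τ => y τ k) (Set.Icc 0 T) := by
      intro k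
      rw [hy]
      exact (hCent k l).add (Continuous.continuousOn (by fun_prop))
    set E : Set ℝ := ⋃ k : n, {τ | τ ∈ Set.Icc (0:ℝ) T ∧ y τ k ≤ 0} with hE
    clear_value E
    have hmemE : ∀ τ : ℝ, τ ∈ E ↔ ∃ k : n, τ ∈ Set.Icc (0:ℝ) T ∧ y τ k ≤ 0 := by
      intro τ
      rw [hE]
      simp only [Set.mem_iUnion, Set.mem_setOf_eq]
    have hEclosed : IsClosed E := by
      rw [hE]
      apply isClosed_iUnion_of_finite
      intro k
      have h0 : {τ | τ ∈ Set.Icc (0:ℝ) T ∧ y τ k ≤ 0}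
          = Set.Icc (0:ℝ) T ∩ (fun τ => y τ k) ⁻¹' Set.Iic 0 := rfl
      rw [h0]
      exact (hycont k).preimage_isClosed_of_isClosed isClosed_Icc isClosed_Iic
    have hEne : E.Nonempty := ⟨r₁, (hmemE r₁).2 ⟨k₁, hr₁, by rw [hy]; exact hk₁⟩⟩
    have hEbdd : BddBelow E := by
      refine ⟨0, fun τ hτ => ?_⟩
      obtain ⟨k, hk⟩ := (hmemE τ).1 hτ
      exact hk.1.1
    set t₀ : ℝ := sInf E with ht₀def
    have ht₀E : t₀ ∈ E := by rw [ht₀def]; exact hEclosed.csInf_mem hEne hEbdd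
    have ht₀lb : ∀ τ ∈ E, t₀ ≤ τ := by
      intro τ hτ
      rw [ht₀def]
      exact csInf_le hEbdd hτ
    clear_value t₀
    obtain ⟨i₀, hi₀⟩ := (hmemE t₀).1 ht₀E
    have ht₀Icc : t₀ ∈ Set.Icc (0:ℝ) T := hi₀.1
    have hi₀le : y t₀ i₀ ≤ 0 := hi₀.2
    have hy0 : ∀ k : n, 0 < y 0 k := by
      intro k
      have h1 : C 0 k l = (1 : Matrix n n ℝ) k l := by rw [hC0]
      have h2 : 0 ≤ (1 : Matrix n n ℝ) k l := by
        rw [Matrix.one_apply]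
        split <;> norm_num
      rw [hy]
      simp only [h1, mul_zero, Real.exp_zero, mul_one]
      linarith
    have ht₀pos : 0 < t₀ := by
      rcases eq_or_lt_of_le ht₀Icc.1 with h | h
      · exfalso
        have := hy0 i₀
        rw [← h] at hi₀le
        linarith
      · exact h
    have hlow : ∀ τ : ℝ, 0 ≤ τ → τ < t₀ → ∀ k : n, 0 < y τ k := by
      intro τ h1 h2 k
      by_contra h
      push_neg at h
      have hτE : τ ∈ E :=
        (hmemE τ).2 ⟨k, ⟨⟨h1, le_trans h2.le ht₀Icc.2⟩, h⟩⟩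
      exact absurd (ht₀lb τ hτE) (not_le.2 h2)
    have hnn : ∀ τ ∈ Set.Icc (0:ℝ) t₀, ∀ k : n, 0 ≤ y τ k := by
      intro τ hτ k
      rcases lt_or_eq_of_le hτ.2 with h | h
      · exact (hlow τ hτ.1 h k).le
      · rw [h]
        have htend : Filter.Tendsto (fun τ => y τ k) (nhdsWithin t₀ (Set.Ico 0 t₀))
            (nhds (y t₀ k)) := by
          refine ((hycont k) t₀ ht₀Icc).mono ?_
          exact Set.Subset.trans Set.Ico_subset_Icc_self
            (Set.Icc_subset_Icc le_rfl ht₀Icc.2)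
        have hne : (nhdsWithin t₀ (Set.Ico 0 t₀)).NeBot := by
          rw [nhdsWithin_Ico_eq_nhdsLT ht₀pos]
          infer_instance
        refine ge_of_tendsto htend ?_
        filter_upwards [self_mem_nhdsWithin] with σ hσ
        exact (hlow σ hσ.1 hσ.2 k).le
    have hyt₀ : y t₀ i₀ = 0 := le_antisymm hi₀le (hnn t₀ ⟨ht₀Icc.1, le_rfl⟩ i₀)
    -- choose s close to t₀
    have hbpos : 0 < ε / (2 * Λ) := div_pos hε (by linarith)
    obtain ⟨δ, hδ0, hδ⟩ : ∃ δ > 0, ∀ τ ∈ Set.Icc (0:ℝ) t₀, dist τ t₀ < δ →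
        y τ i₀ < ε / (2 * Λ) := by
      have hcy : ContinuousWithinAt (fun τ => y τ i₀) (Set.Icc 0 t₀) t₀ := by
        refine ((hycont i₀) t₀ ht₀Icc).mono ?_
        exact Set.Icc_subset_Icc le_rfl ht₀Icc.2
      rw [Metric.continuousWithinAt_iff] at hcy
      obtain ⟨δ, hδ0, hδ⟩ := hcy (ε / (2 * Λ)) hbpos
      refine ⟨δ, hδ0, fun τ hτ hdist => ?_⟩
      have := hδ hτ hdist
      rw [Real.dist_eq, hyt₀, sub_zero] at this
      exact lt_of_le_of_lt (le_abs_self _) this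
    set s : ℝ := max 0 (t₀ - δ / 2) with hsdef
    have hs0 : (0:ℝ) ≤ s := by rw [hsdef]; exact le_max_left _ _
    have hst : s < t₀ := by rw [hsdef]; exact max_lt ht₀pos (by linarith)
    have hslb : t₀ - δ / 2 ≤ s := by rw [hsdef]; exact le_max_right _ _
    clear_value s
    have hsIcc : s ∈ Set.Icc (0:ℝ) T := ⟨hs0, le_trans hst.le ht₀Icc.2⟩
    have hyle : ∀ τ ∈ Set.Icc s t₀, y τ i₀ ≤ ε / (2 * Λ) := by
      intro τ hτ
      refine (hδ τ ⟨le_trans hs0 hτ.1, hτ.2⟩ ?_).le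
      rw [Real.dist_eq, abs_of_nonpos (by linarith [hτ.2])]
      linarith [hτ.1]
    -- the integral identity for y
    have hexp : ∀ τ : ℝ, HasDerivAt (fun σ => ε * Real.exp (K * σ))
        (ε * K * Real.exp (K * τ)) τ := by
      intro τ
      have hf : HasDerivAt (fun σ => K * σ) K τ := by
        simpa using (hasDerivAt_id τ).const_mul K
      have := (hf.exp).const_mul ε
      exact this.congr_deriv (by ring)
    have hexpcont : Continuous (fun τ => ε * K * Real.exp (K * τ)) := by fun_prop
    have hexpint : ∫ τ in s..t₀, ε * K * Real.exp (K * τ)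
        = ε * Real.exp (K * t₀) - ε * Real.exp (K * s) :=
      intervalIntegral.integral_eq_sub_of_hasDerivAt (fun τ _ => hexp τ)
        (hexpcont.intervalIntegrable s t₀)
    have hkey := key i₀ l s t₀ hsIcc ht₀Icc
    have hPint : IntervalIntegrable
        (fun τ => ((A + u τ • B) * C τ) i₀ l + ε * K * Real.exp (K * τ)) volume s t₀ :=
      (hint i₀ l s t₀ hsIcc ht₀Icc).add (hexpcont.intervalIntegrable s t₀)
    have hyid : y t₀ i₀ - y s i₀
        = ∫ τ in s..t₀, (((A + u τ • B) * C τ) i₀ l + ε * K * Real.exp (K * τ)) := by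
      rw [intervalIntegral.integral_add (hint i₀ l s t₀ hsIcc ht₀Icc)
        (hexpcont.intervalIntegrable s t₀), hexpint]
      simp only [hy]
      linarith [hkey]
    -- pointwise lower bound on the integrand
    have hPlb : ∀ τ ∈ Set.Icc s t₀,
        ε / 2 ≤ ((A + u τ • B) * C τ) i₀ l + ε * K * Real.exp (K * τ) := by
      intro τ hτ
      have hτ0 : 0 ≤ τ := le_trans hs0 hτ.1
      have hτIcc : τ ∈ Set.Icc (0:ℝ) T := ⟨hτ0, le_trans hτ.2 ht₀Icc.2⟩
      set e : ℝ := ε * Real.exp (K * τ) with hedef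
      clear_value e
      have he0 : 0 < e := by rw [hedef]; exact mul_pos hε (Real.exp_pos _)
      have heε : ε ≤ e := by
        have h1 : (1:ℝ) ≤ Real.exp (K * τ) := Real.one_le_exp (mul_nonneg hK0.le hτ0)
        rw [hedef]; nlinarith
      have hyτ : ∀ k : n, 0 ≤ y τ k := hnn τ ⟨hτ0, hτ.2⟩
      have hCk : ∀ k : n, -e ≤ C τ k l := by
        intro k
        have := hyτ k
        simp only [hy] at this
        rw [hedef]
        linarith
      have hyi : y τ i₀ ≤ ε / (2 * Λ) := hyle τ hτ
      -- expand the matrix product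
      rw [Matrix.mul_apply]
      have hterm : ∀ k : n, k ≠ i₀ → -(Λ * e) ≤ (A + u τ • B) i₀ k * C τ k l := by
        intro k hk
        have h1 : 0 ≤ (A + u τ • B) i₀ k := hMz τ i₀ k (Ne.symm hk)
        have h2 : (A + u τ • B) i₀ k ≤ Λ := (abs_le.1 (hMbound τ i₀ k)).2
        nlinarith [hCk k]
      have hdiag : -(Λ * y τ i₀) - Λ * e ≤ (A + u τ • B) i₀ i₀ * C τ i₀ l := by
        have h2 := abs_le.1 (hMbound τ i₀ i₀)
        have h3 := hyτ i₀
        have h4 : C τ i₀ l = y τ i₀ - e := by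
          simp only [hy]; rw [hedef]; ring
        rw [h4]
        nlinarith [h2.1, h2.2]
      have hsplit : (A + u τ • B) i₀ i₀ * C τ i₀ l
          + ∑ k ∈ Finset.univ.erase i₀, (A + u τ • B) i₀ k * C τ k l
          = ∑ k : n, (A + u τ • B) i₀ k * C τ k l :=
        Finset.add_sum_erase _ (fun k => (A + u τ • B) i₀ k * C τ k l) (Finset.mem_univ i₀)
      have herase : -((Fintype.card n : ℝ) * (Λ * e))
          ≤ ∑ k ∈ Finset.univ.erase i₀, (A + u τ • B) i₀ k * C τ k l := by
        have h8 : ∀ k ∈ Finset.univ.erase i₀,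
            -(Λ * e) ≤ (A + u τ • B) i₀ k * C τ k l :=
          fun k hk => hterm k (Finset.mem_erase.1 hk).1
        have h9 := Finset.sum_le_sum h8
        rw [Finset.sum_const, nsmul_eq_mul] at h9
        have hcard : ((Finset.univ.erase i₀).card : ℝ) ≤ (Fintype.card n : ℝ) := by
          have h := Finset.card_erase_le (s := (Finset.univ : Finset n)) (a := i₀)
          rw [← Finset.card_univ]
          exact_mod_cast h
        set m : ℝ := ((Finset.univ.erase i₀).card : ℝ) with hm
        set N : ℝ := (Fintype.card n : ℝ) with hN
        clear_value m N
        have hx : 0 ≤ Λ * e := (mul_pos hΛ0 he0).le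
        have h11 := mul_le_mul_of_nonneg_right hcard hx
        linarith
      have hKe : ε * K * Real.exp (K * τ)
          = (Fintype.card n : ℝ) * (Λ * e) + Λ * e + e := by
        rw [hedef, hKdef]; ring
      have hΛy : Λ * y τ i₀ ≤ ε / 2 := by
        have := mul_le_mul_of_nonneg_left hyi hΛ0.le
        have heq : Λ * (ε / (2 * Λ)) = ε / 2 := by
          field_simp
        linarith
      have hsum : -(Λ * y τ i₀) - Λ * e - (Fintype.card n : ℝ) * (Λ * e)
          ≤ ∑ k : n, (A + u τ • B) i₀ k * C τ k l := by
        rw [← hsplit]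
        linarith
      rw [hKe]
      linarith
    -- conclude
    have h10 := intervalIntegral.integral_mono_on hst.le
      (_root_.intervalIntegrable_const (c := ε / 2)) hPint hPlb
    rw [intervalIntegral.integral_const, smul_eq_mul] at h10
    have h11 : 0 < (t₀ - s) * (ε / 2) := by
      have : 0 < t₀ - s := by linarith
      positivity
    have h12 : 0 < y s i₀ := hlow s hs0 hst i₀
    rw [← hyid, hyt₀] at h10
    linarith
  -- deduce the theorem from the main claim
  intro t ht i j
  by_contra hneg
  push_neg at hneg
  have hεpos : 0 < -(C t i j) / Real.exp (K * t) := by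
    apply div_pos (by linarith) (Real.exp_pos _)
  have hmain := main (-(C t i j) / Real.exp (K * t)) hεpos j t ht i
  rw [div_mul_cancel₀ _ (Real.exp_ne_zero _)] at hmain
  linarith
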